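/- If θ : [N] → Z is an order-preserving injection and θ_U : U → U is the algebra homomorphism sending u_i to u_{θ(i)} (with u_j := 0 for j ∉ [N]), then θ_U(I_RKst) ⊆ I_RKst, so θ_U induces an algebra homomorphism U/I_RKst → U/I_RKst. -/

import Mathlib

open scoped Classical

noncomputable section

/-- The monomial (word) in the free associative algebra `U = ℤ⟨u_1, …, u_N⟩`,
whose variables are indexed by `Fin N` (index `i` corresponds to the letter `i+1 ∈ [N]`). -/
def word (N : ℕ) (l : List (Fin N)) : FreeAlgebra ℤ (Fin N) :=
  (l.map (FreeAlgebra.ι ℤ)).prod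

/-- The generating relations of the two-sided ideal `I_RKst`. -/
inductive RKRel (N : ℕ) : FreeAlgebra ℤ (Fin N) → FreeAlgebra ℤ (Fin N) → Prop
  | knuth_rotation (a b c : Fin N) (hab : a < b) (hbc : b < c) :
      RKRel N
        (FreeAlgebra.ι ℤ b *
            (FreeAlgebra.ι ℤ a * FreeAlgebra.ι ℤ c - FreeAlgebra.ι ℤ c * FreeAlgebra.ι ℤ a) -
          (FreeAlgebra.ι ℤ a * FreeAlgebra.ι ℤ c - FreeAlgebra.ι ℤ c * FreeAlgebra.ι ℤ a) *
            FreeAlgebra.ι ℤ b)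
        0
  | repeated (l : List (Fin N)) (h : ¬ l.Nodup) : RKRel N (word N l) 0

/-- The two-sided ideal `I_RKst`, realized as the congruence class of `0` under the ring
congruence generated by the relations `RKRel N`. -/
def IRKst (N : ℕ) : Set (FreeAlgebra ℤ (Fin N)) :=
  {z | ringConGen (RKRel N) z 0}

/-- The algebra endomorphism `θ_U : U → U` induced by a map `θ : [N] → ℤ` on letters,
sending `u_i ↦ u_{θ(i)}`, where `u_j := 0` for `j ∉ [N]`.  Here the variable indexed by
`i : Fin N` is the letter `i+1 ∈ [N] = {1, …, N}`. -/
def thetaU (N : ℕ) (θ : Fin N → ℤ) : FreeAlgebra ℤ (Fin N) →ₐ[ℤ] FreeAlgebra ℤ (Fin N) :=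
  FreeAlgebra.lift ℤ (fun i =>
    if h : 1 ≤ θ i ∧ θ i ≤ (N : ℤ) then
      FreeAlgebra.ι ℤ (⟨(θ i - 1).toNat, by omega⟩ : Fin N)
    else 0)

lemma mkRingHom_eq_iff_ringConGen {R : Type*} [Semiring R] (r : R → R → Prop) (x y : R) :
    RingQuot.mkRingHom r x = RingQuot.mkRingHom r y ↔ ringConGen r x y := by
  rw [RingQuot.mkRingHom_def]
  simp only [RingHom.coe_mk, MonoidHom.coe_mk, OneHom.coe_mk, RingQuot.mk.injEq]
  rw [Quot.eq, RingQuot.eqvGen_rel_eq]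
  rfl

lemma mem_IRKst_iff (N : ℕ) (z : FreeAlgebra ℤ (Fin N)) :
    z ∈ IRKst N ↔ RingQuot.mkAlgHom ℤ (RKRel N) z = 0 := by
  have h0 : (0 : RingQuot (RKRel N)) = RingQuot.mkAlgHom ℤ (RKRel N) 0 := (map_zero _).symm
  have hco : ∀ w : FreeAlgebra ℤ (Fin N),
      RingQuot.mkAlgHom ℤ (RKRel N) w = RingQuot.mkRingHom (RKRel N) w := fun w => by
    rw [← RingQuot.mkAlgHom_coe ℤ (RKRel N)]; rfl
  rw [IRKst, Set.mem_setOf_eq, h0, hco, hco]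
  exact (mkRingHom_eq_iff_ringConGen _ _ _).symm

/-- If `θ : [N] → ℤ` is an order-preserving injection (equivalently, strictly monotone),
then `θ_U(I_RKst) ⊆ I_RKst`, and hence `θ_U` induces an algebra homomorphism
`U/I_RKst → U/I_RKst`. -/
theorem thetaU_preserves_IRKst_of_strictMono (N : ℕ) (θ : Fin N → ℤ) (hθ : StrictMono θ) :
    (∀ z ∈ IRKst N, thetaU N θ z ∈ IRKst N) ∧
      ∃ φ : RingQuot (RKRel N) →ₐ[ℤ] RingQuot (RKRel N),
        ∀ z, φ (RingQuot.mkAlgHom ℤ (RKRel N) z) =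
          RingQuot.mkAlgHom ℤ (RKRel N) (thetaU N θ z) := by
  set f : Fin N → FreeAlgebra ℤ (Fin N) := fun i =>
    if h : 1 ≤ θ i ∧ θ i ≤ (N : ℤ) then
      FreeAlgebra.ι ℤ (⟨(θ i - 1).toNat, by omega⟩ : Fin N)
    else 0 with hf
  set g : Fin N → Fin N := fun i =>
    if h : 1 ≤ θ i ∧ θ i ≤ (N : ℤ) then (⟨(θ i - 1).toNat, by omega⟩ : Fin N) else i with hg
  have hfι : ∀ i, (1 ≤ θ i ∧ θ i ≤ (N : ℤ)) → f i = FreeAlgebra.ι ℤ (g i) := by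
    intro i hi; simp [hf, hg, hi]
  have hf0 : ∀ i, ¬(1 ≤ θ i ∧ θ i ≤ (N : ℤ)) → f i = 0 := by
    intro i hi; simp [hf, hi]
  have hlift : ∀ i, thetaU N θ (FreeAlgebra.ι ℤ i) = f i := by
    intro i; simp [thetaU, hf]
  have key : ∀ x y, RKRel N x y →
      RingQuot.mkAlgHom ℤ (RKRel N) (thetaU N θ x) =
        RingQuot.mkAlgHom ℤ (RKRel N) (thetaU N θ y) := by
    intro x y hxy
    induction hxy with
    | knuth_rotation a b c hab hbc =>
      have e : thetaU N θ
          (FreeAlgebra.ι ℤ b *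
              (FreeAlgebra.ι ℤ a * FreeAlgebra.ι ℤ c - FreeAlgebra.ι ℤ c * FreeAlgebra.ι ℤ a) -
            (FreeAlgebra.ι ℤ a * FreeAlgebra.ι ℤ c - FreeAlgebra.ι ℤ c * FreeAlgebra.ι ℤ a) *
              FreeAlgebra.ι ℤ b) =
          f b * (f a * f c - f c * f a) - (f a * f c - f c * f a) * f b := by
        simp only [map_sub, map_mul, hlift]
      rw [e, map_zero]
      by_cases hb : 1 ≤ θ b ∧ θ b ≤ (N : ℤ)
      · by_cases ha : 1 ≤ θ a ∧ θ a ≤ (N : ℤ)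
        · by_cases hc : 1 ≤ θ c ∧ θ c ≤ (N : ℤ)
          · rw [hfι a ha, hfι b hb, hfι c hc]
            have hab' : g a < g b := by
              have := hθ hab
              simp only [hg, dif_pos ha, dif_pos hb, Fin.mk_lt_mk]
              omega
            have hbc' : g b < g c := by
              have := hθ hbc
              simp only [hg, dif_pos hb, dif_pos hc, Fin.mk_lt_mk]
              omega
            exact RingQuot.mkAlgHom_rel ℤ (RKRel.knuth_rotation (g a) (g b) (g c) hab' hbc')
          · rw [hf0 c hc]; simp
        · rw [hf0 a ha]; simp
      · rw [hf0 b hb]; simp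
    | repeated l hl =>
      have hword : thetaU N θ (word N l) = (l.map f).prod := by
        rw [word, map_list_prod, List.map_map]
        congr 1
        exact List.map_congr_left fun i _ => hlift i
      rw [hword, map_zero]
      by_cases hex : ∃ i ∈ l, ¬(1 ≤ θ i ∧ θ i ≤ (N : ℤ))
      · obtain ⟨i, hi, hni⟩ := hex
        have : (0 : FreeAlgebra ℤ (Fin N)) ∈ l.map f := by
          rw [← hf0 i hni]
          exact List.mem_map_of_mem (f := f) hi
        rw [List.prod_eq_zero this]
      · push_neg at hex
        have : (l.map f).prod = word N (l.map g) := by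
          rw [word, List.map_map]
          congr 1
          exact List.map_congr_left fun i hi => hfι i (hex i hi)
        rw [this]
        refine RingQuot.mkAlgHom_rel ℤ (RKRel.repeated _ ?_)
        exact fun h => hl h.of_map
  refine ⟨?_, ⟨RingQuot.liftAlgHom ℤ ⟨(RingQuot.mkAlgHom ℤ (RKRel N)).comp (thetaU N θ),
      key⟩, fun z => RingQuot.liftAlgHom_mkAlgHom_apply ℤ _ _ _⟩⟩
  intro z hz
  rw [mem_IRKst_iff] at hz ⊢
  have := RingQuot.liftAlgHom_mkAlgHom_apply ℤ
    ((RingQuot.mkAlgHom ℤ (RKRel N)).comp (thetaU N θ)) key z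
  rw [hz, map_zero] at this
  exact this.symm

end
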